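/- The hyperbolic (pullback-limit) solution solves the controlled linear equation: if ξ : ℝ → E is continuous with ‖ξ s‖ ≤ 1 for all s, then the function x_ξ defined by x_ξ t = ρ • ∫ s in Set.Iic t, Ψ t s (ξ s) (which converges absolutely by exponential stability) satisfies HasDerivAt x_ξ (L t (x_ξ t) + ρ • ξ t) t for every t ∈ ℝ; moreover ‖x_ξ t‖ ≤ ρ * K / γ for all t, so x_ξ is the bounded solution of x' = L(t)x + ρξ(t) on the whole real line. -/

import Mathlib

open MeasureTheory Set Metric Pointwise
open scoped RealInnerProductSpace

noncomputable section

abbrev Euc (d : ℕ) : Type := EuclideanSpace ℝ (Fin d)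

/-- The set of admissible controls: measurable functions with values in the closed unit ball. -/
def ctrlSet (d : ℕ) : Set (ℝ → Euc d) :=
  {ξ | Measurable ξ ∧ ∀ s, ‖ξ s‖ ≤ 1}

/-- The attractor fibre at time `t`. -/
def Afib (d : ℕ) (Ψ : ℝ → ℝ → (Euc d →L[ℝ] Euc d)) (ρ t : ℝ) : Set (Euc d) :=
  {x | ∃ ξ ∈ ctrlSet d, x = ρ • ∫ s in Set.Iic t, Ψ t s (ξ s)}

/-- The reachable-set operator of the linear differential inclusion. -/
def reach (d : ℕ) (Ψ : ℝ → ℝ → (Euc d →L[ℝ] Euc d)) (ρ t t₀ : ℝ) (S : Set (Euc d)) :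
    Set (Euc d) :=
  {y | ∃ x₀ ∈ S, ∃ ξ ∈ ctrlSet d, y = Ψ t t₀ x₀ + ρ • ∫ s in Set.Icc t₀ t, Ψ t s (ξ s)}

/-- Antiderivative of `exp (γ * s)`. -/
lemma expMul_hasDerivAt (γ : ℝ) (h : γ ≠ 0) (s : ℝ) :
    HasDerivAt (fun u => Real.exp (γ * u) / γ) (Real.exp (γ * s)) s := by
  have h1 : HasDerivAt (fun u : ℝ => γ * u) γ s := by
    simpa using (hasDerivAt_id s).const_mul γ
  have := (h1.exp).div_const γ
  simpa [mul_comm, mul_div_assoc, mul_div_cancel_left₀ _ h] using this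

lemma expMul_intervalIntegral (γ : ℝ) (h : γ ≠ 0) (a b : ℝ) :
    ∫ s in a..b, Real.exp (γ * s) = Real.exp (γ * b) / γ - Real.exp (γ * a) / γ :=
  intervalIntegral.integral_eq_sub_of_hasDerivAt (fun s _ => expMul_hasDerivAt γ h s)
    ((Real.continuous_exp.comp (continuous_const.mul continuous_id)).intervalIntegrable a b)

lemma expMul_integrableOn_Iic (γ b : ℝ) (hγ : 0 < γ) :
    IntegrableOn (fun s => Real.exp (γ * s)) (Iic b) := by
  have hc : Continuous fun s : ℝ => Real.exp (γ * s) :=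
    Real.continuous_exp.comp (continuous_const.mul continuous_id)
  refine integrableOn_Iic_of_intervalIntegral_norm_bounded (Real.exp (γ * b) / γ) b
    (fun i : ℝ => hc.integrableOn_Ioc) Filter.tendsto_id ?_
  filter_upwards [Filter.eventually_le_atBot b] with i (hi : i ≤ b)
  have : (∫ s in i..b, ‖Real.exp (γ * s)‖) = ∫ s in i..b, Real.exp (γ * s) := by
    simp [Real.norm_eq_abs, Real.abs_exp]
  simp only [id_eq]
  rw [this, expMul_intervalIntegral γ hγ.ne']
  have : 0 ≤ Real.exp (γ * i) / γ := div_nonneg (Real.exp_pos _).le hγ.le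
  linarith

lemma expMul_integral_Iic (γ b : ℝ) (hγ : 0 < γ) :
    ∫ s in Iic b, Real.exp (γ * s) = Real.exp (γ * b) / γ := by
  have h1 := intervalIntegral_tendsto_integral_Iic b (expMul_integrableOn_Iic γ b hγ)
    (Filter.tendsto_id (α := ℝ))
  have h2 : Filter.Tendsto (fun i : ℝ => ∫ s in i..b, Real.exp (γ * s)) Filter.atBot
      (nhds (Real.exp (γ * b) / γ)) := by
    have hexp : Filter.Tendsto (fun i : ℝ => Real.exp (γ * i)) Filter.atBot (nhds 0) :=
      Real.tendsto_exp_atBot.comp (Filter.tendsto_id.const_mul_atBot hγ)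
    have := (tendsto_const_nhds (x := Real.exp (γ * b) / γ)
      (f := Filter.atBot (α := ℝ))).sub (hexp.div_const γ)
    simp only [zero_div, sub_zero] at this
    refine this.congr fun i => ?_
    rw [expMul_intervalIntegral γ hγ.ne']
  exact tendsto_nhds_unique h1 h2

/-- The hyperbolic (pullback-limit) solution solves the controlled linear equation and
is bounded on the whole real line. -/
theorem hyperbolic_solution_solves
    (d : ℕ) (hd : 1 ≤ d)
    (L : ℝ → (Euc d →L[ℝ] Euc d)) (hL : Continuous L)
    (Ψ : ℝ → ℝ → (Euc d →L[ℝ] Euc d))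
    (hΨc : Continuous fun p : ℝ × ℝ => Ψ p.1 p.2)
    (hΨid : ∀ t : ℝ, Ψ t t = ContinuousLinearMap.id ℝ (Euc d))
    (hΨcoc : ∀ t s r : ℝ, (Ψ t s).comp (Ψ s r) = Ψ t r)
    (hΨd : ∀ (s : ℝ) (x : Euc d) (t : ℝ), HasDerivAt (fun τ => Ψ τ s x) (L t (Ψ t s x)) t)
    (K γ : ℝ) (hK : 1 ≤ K) (hγ : 0 < γ)
    (hstab : ∀ s t : ℝ, s ≤ t → ‖Ψ t s‖ ≤ K * Real.exp (-γ * (t - s)))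
    (ρ : ℝ) (hρ : 0 < ρ)
    (ξ : ℝ → Euc d) (hξc : Continuous ξ) (hξb : ∀ s : ℝ, ‖ξ s‖ ≤ 1) :
    (∀ t : ℝ, HasDerivAt (fun τ => ρ • ∫ s in Set.Iic τ, Ψ τ s (ξ s))
      (L t (ρ • ∫ s in Set.Iic t, Ψ t s (ξ s)) + ρ • ξ t) t) ∧
    (∀ t : ℝ, ‖ρ • ∫ s in Set.Iic t, Ψ t s (ξ s)‖ ≤ ρ * K / γ) := by
  have hcont : ∀ a : ℝ, Continuous fun s => Ψ a s (ξ s) := fun a =>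
    (hΨc.comp (continuous_const.prodMk continuous_id)).clm_apply hξc
  -- pointwise exponential bound
  have hbd : ∀ a s : ℝ, s ≤ a → ‖Ψ a s (ξ s)‖ ≤ K * Real.exp (-γ * a) * Real.exp (γ * s) := by
    intro a s hsa
    calc ‖Ψ a s (ξ s)‖ ≤ ‖Ψ a s‖ * ‖ξ s‖ := (Ψ a s).le_opNorm _
      _ ≤ (K * Real.exp (-γ * (a - s))) * 1 := by
          apply mul_le_mul (hstab s a hsa) (hξb s) (norm_nonneg _)
          positivity
      _ = K * Real.exp (-γ * a) * Real.exp (γ * s) := by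
          rw [mul_one, mul_assoc, ← Real.exp_add]; ring_nf
  -- integrability of the integrand on half-lines
  have hint : ∀ a b : ℝ, IntegrableOn (fun s => Ψ a s (ξ s)) (Iic b) := by
    intro a b
    have h1 : IntegrableOn (fun s => Ψ a s (ξ s)) (Iic (min a b)) := by
      refine Integrable.mono'
        ((expMul_integrableOn_Iic γ (min a b) hγ).const_mul (K * Real.exp (-γ * a)))
        ((hcont a).aestronglyMeasurable.restrict) ?_
      filter_upwards [ae_restrict_mem measurableSet_Iic] with s hs
      exact hbd a s (le_trans hs (min_le_left a b))
    have h2 : IntegrableOn (fun s => Ψ a s (ξ s)) (Icc (min a b) b) := (hcont a).integrableOn_Icc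
    refine (h1.union h2).mono_set fun s hs => ?_
    rcases le_or_gt s (min a b) with h | h
    · exact Or.inl h
    · exact Or.inr ⟨h.le, hs⟩
  set f : ℝ → Euc d := fun s => Ψ 0 s (ξ s) with hf
  have hfc : Continuous f := hcont 0
  have hintf : ∀ b : ℝ, IntegrableOn f (Iic b) := fun b => hint 0 b
  set g : ℝ → Euc d := fun t => ∫ s in Iic t, f s with hgdef
  -- key reduction to a fixed base point
  have hkey : ∀ t : ℝ, (∫ s in Iic t, Ψ t s (ξ s)) = Ψ t 0 (g t) := by
    intro t
    calc (∫ s in Iic t, Ψ t s (ξ s)) = ∫ s in Iic t, Ψ t 0 (f s) := by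
          refine integral_congr_ae (Filter.Eventually.of_forall fun s => ?_)
          show Ψ t s (ξ s) = Ψ t 0 (f s)
          rw [← hΨcoc t 0 s]
          rfl
      _ = Ψ t 0 (g t) := ContinuousLinearMap.integral_comp_comm _ (hintf t)
  -- derivative of g
  have hgrep : ∀ t : ℝ, g t = g 0 + ∫ s in (0:ℝ)..t, f s := by
    intro t
    have h := intervalIntegral.integral_Iic_sub_Iic (hintf 0) (hintf t)
    rw [← h]
    simp only [hgdef]
    abel
  have hg : ∀ t : ℝ, HasDerivAt g (f t) t := by
    intro t
    have h := (intervalIntegral.integral_hasDerivAt_right (hfc.intervalIntegrable 0 t)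
      ⟨univ, Filter.univ_mem, hfc.aestronglyMeasurable.restrict⟩ hfc.continuousAt).const_add (g 0)
    rwa [show (fun u => g 0 + ∫ s in (0:ℝ)..u, f s) = g from funext fun u => (hgrep u).symm] at h
  -- derivative of the operator family τ ↦ Ψ τ 0
  have hA : Continuous fun u : ℝ => (L u).comp (Ψ u 0) :=
    hL.clm_comp (hΨc.comp (continuous_id.prodMk continuous_const))
  have hGrep : ∀ τ : ℝ, Ψ τ 0
      = ContinuousLinearMap.id ℝ (Euc d) + ∫ u in (0:ℝ)..τ, (L u).comp (Ψ u 0) := by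
    intro τ
    ext x
    have hd' : ∀ u ∈ uIcc (0:ℝ) τ, HasDerivAt (fun v => Ψ v 0 x) (L u (Ψ u 0 x)) u :=
      fun u _ => hΨd 0 x u
    have hci : Continuous fun u : ℝ => ((L u).comp (Ψ u 0)) x := hA.clm_apply continuous_const
    have hft := intervalIntegral.integral_eq_sub_of_hasDerivAt hd' (hci.intervalIntegrable 0 τ)
    rw [ContinuousLinearMap.add_apply,
      ContinuousLinearMap.intervalIntegral_apply (hA.intervalIntegrable 0 τ)]
    simp only [ContinuousLinearMap.comp_apply]
    rw [hft, hΨid 0]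
    simp
  have hG : ∀ t : ℝ, HasDerivAt (fun τ => Ψ τ 0) ((L t).comp (Ψ t 0)) t := by
    intro t
    have h := (intervalIntegral.integral_hasDerivAt_right (hA.intervalIntegrable 0 t)
      ⟨univ, Filter.univ_mem, hA.aestronglyMeasurable.restrict⟩ hA.continuousAt).const_add
      (ContinuousLinearMap.id ℝ (Euc d))
    rwa [show (fun τ => ContinuousLinearMap.id ℝ (Euc d) + ∫ u in (0:ℝ)..τ, (L u).comp (Ψ u 0))
      = fun τ => Ψ τ 0 from funext fun τ => (hGrep τ).symm] at h
  constructor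
  · intro t
    have hx : (fun τ => ρ • ∫ s in Iic τ, Ψ τ s (ξ s)) = fun τ => ρ • (Ψ τ 0 (g τ)) :=
      funext fun τ => by rw [hkey τ]
    rw [hx]
    have hd := ((hG t).clm_apply (hg t)).const_smul ρ
    have h1 : Ψ t 0 (f t) = ξ t := by
      calc Ψ t 0 (f t) = ((Ψ t 0).comp (Ψ 0 t)) (ξ t) := rfl
        _ = Ψ t t (ξ t) := by rw [hΨcoc]
        _ = ξ t := by rw [hΨid]; rfl
    refine hd.congr_deriv ?_
    rw [hkey t, h1]
    simp only [ContinuousLinearMap.comp_apply, smul_add, ContinuousLinearMap.map_smul]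
  · intro t
    have h1 : ‖∫ s in Iic t, Ψ t s (ξ s)‖
        ≤ ∫ s in Iic t, K * Real.exp (-γ * t) * Real.exp (γ * s) := by
      refine norm_integral_le_of_norm_le
        ((expMul_integrableOn_Iic γ t hγ).const_mul (K * Real.exp (-γ * t))) ?_
      filter_upwards [ae_restrict_mem measurableSet_Iic] with s hs
      exact hbd t s hs
    have h2 : (∫ s in Iic t, K * Real.exp (-γ * t) * Real.exp (γ * s)) = K / γ := by
      rw [MeasureTheory.integral_const_mul, expMul_integral_Iic γ t hγ]
      have hone : Real.exp (-γ * t) * Real.exp (γ * t) = 1 := by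
        rw [← Real.exp_add]; ring_nf; exact Real.exp_zero
      calc K * Real.exp (-γ * t) * (Real.exp (γ * t) / γ)
          = K * (Real.exp (-γ * t) * Real.exp (γ * t)) / γ := by ring
        _ = K / γ := by rw [hone, mul_one]
    rw [norm_smul, Real.norm_eq_abs, abs_of_pos hρ]
    calc ρ * ‖∫ s in Iic t, Ψ t s (ξ s)‖ ≤ ρ * (K / γ) :=
          mul_le_mul_of_nonneg_left (h1.trans_eq h2) hρ.le
      _ = ρ * K / γ := by ring
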